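/- Suppose μ, μ̂, σ : S → ℝ are continuous, σ is strictly positive, c ∈ ℝ, τ > 0 and a > 0. If the inclusions Â_c^+ ⊆ A_c ⊆ Â_c^− hold, then ∂A_c ⊆ cl(Â_c^− \ Â_c^+), where cl denotes the topological closure in S. -/
import Mathlib


noncomputable section

/-- The excursion set `A_c = {s : μ s ≥ c}`. -/
def excursionSet {α : Type*} (μ : α → ℝ) (c : ℝ) : Set α := {s | c ≤ μ s}

/-- The upper CoPE set `Â_c(+a)`. -/
def copePlus {α : Type*} (μhat σ : α → ℝ) (c τ a : ℝ) : Set α :=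
  {s | a ≤ (μhat s - c) / (τ * σ s)}

/-- The lower CoPE set `Â_c(-a)`. -/
def copeMinus {α : Type*} (μhat σ : α → ℝ) (c τ a : ℝ) : Set α :=
  {s | -a ≤ (μhat s - c) / (τ * σ s)}

/-- If the CoPE inclusions `Â_c^+ ⊆ A_c ⊆ Â_c^-` hold, then the boundary `∂A_c` is contained
in the closure of `Â_c^- \ Â_c^+`. -/
theorem frontier_subset_closure_of_cope_inclusion
    {N : ℕ} (hN : 1 ≤ N) (S : Set (EuclideanSpace ℝ (Fin N))) (hS : IsCompact S)
    (μ μhat σ : S → ℝ) (hμ : Continuous μ) (hμhat : Continuous μhat) (hσc : Continuous σ)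
    (hσ : ∀ s, 0 < σ s) (c τ a : ℝ) (hτ : 0 < τ) (ha : 0 < a)
    (hincl : copePlus μhat σ c τ a ⊆ excursionSet μ c ∧
      excursionSet μ c ⊆ copeMinus μhat σ c τ a) :
    frontier (excursionSet μ c) ⊆
      closure (copeMinus μhat σ c τ a \ copePlus μhat σ c τ a) := by
  obtain ⟨h1, h2⟩ := hincl
  set f : S → ℝ := fun s => (μhat s - c) / (τ * σ s) with hf
  have hfc : Continuous f := by
    apply Continuous.div (hμhat.sub continuous_const) (continuous_const.mul hσc)
    intro s; exact ne_of_gt (mul_pos hτ (hσ s))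
  intro x hx
  rw [frontier_eq_closure_inter_closure] at hx
  obtain ⟨hx1, hx2⟩ := hx
  rw [mem_closure_iff] at hx1 hx2 ⊢
  intro o ho hxo
  by_cases hxp : x ∈ copePlus μhat σ c τ a
  · have hopen : IsOpen {s : S | -a < f s} := isOpen_lt continuous_const hfc
    obtain ⟨y, hy, hyc⟩ := hx2 (o ∩ {s | -a < f s}) (ho.inter hopen)
      ⟨hxo, show -a < f x from lt_of_lt_of_le (by linarith) (show a ≤ f x from hxp)⟩
    exact ⟨y, hy.1, ⟨show -a ≤ f y from le_of_lt hy.2, fun hc => hyc (h1 hc)⟩⟩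
  · have hopen : IsOpen {s : S | f s < a} := isOpen_lt hfc continuous_const
    obtain ⟨y, hy, hyc⟩ := hx1 (o ∩ {s | f s < a}) (ho.inter hopen)
      ⟨hxo, show f x < a from lt_of_not_ge hxp⟩
    exact ⟨y, hy.1, ⟨h2 hyc, show ¬ a ≤ f y from not_le_of_gt hy.2⟩⟩

end
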